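/- Consider n threads each performing a sequence of non-overlapping operations, where each operation op has a start time s and finish time f with s < f, operations by the same thread satisfy s_{next} > f_{prev}, and finish times are distinct integers (one operation finishes per time step). Define the contention ℓ of an operation finishing at time f with start time s as the number of operations op' with s ≤ f' < f. Then among any Cn consecutive time steps t, t+1, …, t+Cn−1, fewer than n of the operations finishing in this window have contention ℓ > Cn. -/

import Mathlib

lemma aux_card_filter {ι : Type*} [Fintype ι] (f : ι → ℤ)
    (hinj : Function.Injective f) (a b : ℤ) :
    (Finset.univ.filter (fun op' => a ≤ f op' ∧ f op' < b)).card ≤ (b - a).toNat := by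
  have h := Finset.card_le_card_of_injOn f
    (s := Finset.univ.filter (fun op' => a ≤ f op' ∧ f op' < b))
    (t := Finset.Ico a b)
    (by intro x hx; simp only [Finset.mem_coe, Finset.mem_filter] at hx; simp [Finset.mem_Ico, hx.2.1, hx.2.2])
    (hinj.injOn)
  simpa [Int.card_Ico] using h

theorem stmt5 {ι : Type*} [Fintype ι] [DecidableEq ι]
    (n C : ℕ) (hn : 0 < n)
    (thread : ι → Fin n) (s f : ι → ℤ)
    (hsf : ∀ op, s op < f op)
    (hinj : Function.Injective f)
    (hthread : ∀ op op', thread op = thread op' → f op < f op' → f op < s op')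
    (contention : ι → ℕ)
    (hcont : ∀ op, contention op
      = (Finset.univ.filter (fun op' => s op ≤ f op' ∧ f op' < f op)).card)
    (t : ℤ) :
    (Finset.univ.filter (fun op : ι =>
        t ≤ f op ∧ f op ≤ t + C * n - 1 ∧ C * n < contention op)).card < n := by
  set S := Finset.univ.filter (fun op : ι =>
      t ≤ f op ∧ f op ≤ t + C * n - 1 ∧ C * n < contention op) with hS
  by_contra hcon
  push_neg at hcon
  -- every bad op starts strictly before t
  have hstart : ∀ j ∈ S, s j < t := by
    intro j hj
    rw [hS, Finset.mem_filter] at hj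
    obtain ⟨-, hjt, hjle, hjc⟩ := hj
    have h1 : contention j ≤ (f j - s j).toNat := hcont j ▸ aux_card_filter f hinj _ _
    have h2 : (C * n : ℕ) < (f j - s j).toNat := lt_of_lt_of_le hjc h1
    have h3 : ((C * n : ℕ) : ℤ) < f j - s j := Int.lt_toNat.mp h2
    push_cast at h3
    linarith
  by_cases hinjS : Set.InjOn thread S
  · -- thread is injective on S, so every thread has a bad op
    have hcard : S.card = n := by
      have h1 : (S.image thread).card = S.card := Finset.card_image_of_injOn hinjS
      have h2 : (S.image thread).card ≤ n := by
        simpa using Finset.card_le_card (Finset.subset_univ (S.image thread))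
      omega
    have himg : S.image thread = Finset.univ :=
      Finset.eq_univ_of_card _ (by rw [Finset.card_image_of_injOn hinjS, hcard, Fintype.card_fin])
    have hne : S.Nonempty := Finset.card_pos.mp (by omega)
    obtain ⟨j, hjS, hjmax⟩ := Finset.exists_max_image S s hne
    have hj := hjS
    rw [hS, Finset.mem_filter] at hj
    obtain ⟨-, hjt, hjle, hjc⟩ := hj
    -- split the contention set of j at time t
    set T := Finset.univ.filter (fun op' => s j ≤ f op' ∧ f op' < f j) with hT
    set T1 := Finset.univ.filter (fun op' : ι => (s j ≤ f op' ∧ f op' < f j) ∧ f op' < t) with hT1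
    set T2 := Finset.univ.filter (fun op' : ι => t ≤ f op' ∧ f op' < f j) with hT2
    have hsub : T ⊆ T1 ∪ T2 := by
      intro x hx
      rw [hT, Finset.mem_filter] at hx
      rw [Finset.mem_union, hT1, hT2, Finset.mem_filter, Finset.mem_filter]
      rcases lt_or_ge (f x) t with h | h
      · exact Or.inl ⟨Finset.mem_univ x, hx.2, h⟩
      · exact Or.inr ⟨Finset.mem_univ x, h, hx.2.2⟩
    have hTcard : C * n < T.card := by rw [hcont j] at hjc; exact hjc
    have hT2card : (T2.card : ℤ) ≤ f j - t := by
      have := aux_card_filter f hinj t (f j)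
      have h2 : (T2.card : ℤ) ≤ ((f j - t).toNat : ℤ) := by exact_mod_cast this
      have h3 : ((f j - t).toNat : ℤ) = f j - t := Int.toNat_of_nonneg (by linarith)
      linarith
    have hT1pos : 0 < T1.card := by
      by_contra h0
      push_neg at h0
      have : T.card ≤ T1.card + T2.card :=
        le_trans (Finset.card_le_card hsub) (Finset.card_union_le _ _)
      have hz : T1.card = 0 := by omega
      have : (C * n : ℤ) < (T2.card : ℤ) := by
        have := hTcard
        omega
      push_cast at this
      linarith
    obtain ⟨op', hop'⟩ := Finset.card_pos.mp hT1pos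
    rw [hT1, Finset.mem_filter] at hop'
    obtain ⟨-, ⟨hsle, hflt⟩, hft⟩ := hop'
    -- thread of op' has some bad op k
    have : thread op' ∈ S.image thread := himg ▸ Finset.mem_univ _
    obtain ⟨k, hkS, hk⟩ := Finset.mem_image.mp this
    have hkmem := hkS
    rw [hS, Finset.mem_filter] at hkmem
    have hfk : f op' < f k := lt_of_lt_of_le hft hkmem.2.1
    have := hthread op' k hk.symm hfk
    have := hjmax k hkS
    linarith
  · -- two bad ops on the same thread
    rw [Set.InjOn] at hinjS
    push_neg at hinjS
    obtain ⟨i, hiS, j, hjS, hij, hne⟩ := hinjS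
    have hiS' : i ∈ S := hiS
    have hjS' : j ∈ S := hjS
    rw [hS, Finset.mem_filter] at hiS' hjS'
    have hfne : f i ≠ f j := fun h => hne (hinj h)
    rcases lt_or_gt_of_ne hfne with h | h
    · have := hthread i j hij h
      have := hstart j hjS
      linarith [hiS'.2.1]
    · have := hthread j i hij.symm h
      have := hstart i hiS
      linarith [hjS'.2.1]
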